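/- Let (e_k) be nonnegative reals satisfying e_{k+1} ≤ (1 - α_k l/2) e_k + C α_k^{2+κ} with α_k = s/(k+σ), where 0 < κ ≤ 1, sl > 2 + 2κ + 2 (i.e., sl/2 > 1+κ and sl > 4), 1+σ-sl/2 > 0, and C ≥ 0. Then e_k = O(1/k^{1+κ}) as k → ∞. -/

import Mathlib

open Filter Asymptotics

set_option maxHeartbeats 1000000

theorem improved_rate_of_recursion
    (e : ℕ → ℝ) (he : ∀ k, 0 ≤ e k)
    (l s σ C κ : ℝ) (hl : 0 < l) (hs : 0 < s) (hσ : 0 < σ) (hC : 0 ≤ C)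
    (hκ0 : 0 < κ) (hκ1 : κ ≤ 1)
    (hsl : 4 < s * l) (hslκ : 1 + κ < s * l / 2) (hσ' : 0 < 1 + σ - s * l / 2)
    (hrec : ∀ k ≥ 1, e (k + 1) ≤ (1 - (s / ((k : ℝ) + σ)) * l / 2) * e k
      + C * (s / ((k : ℝ) + σ)) ^ (2 + κ)) :
    (fun k : ℕ => e k) =O[atTop] fun k : ℕ => 1 / (k : ℝ) ^ (1 + κ) := by
  set p : ℝ := 1 + κ with hpdef
  have hp1 : 1 ≤ p := by simp only [hpdef]; linarith
  have hp0 : 0 < p := by linarith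
  have hδ : 0 < s * l / 2 - p := by simp only [hpdef]; linarith
  obtain ⟨k0, hk0⟩ := exists_nat_ge (max 1 (s * l))
  have hk01 : 1 ≤ k0 := by
    have := le_trans (le_max_left 1 (s*l)) hk0
    exact_mod_cast this
  have hk0sl : s * l ≤ (k0 : ℝ) := le_trans (le_max_right 1 (s*l)) hk0
  set M : ℝ := max (C * s ^ (2 + κ) / (s * l / 2 - p)) (e k0 * ((k0 : ℝ) + σ) ^ p) with hMdef
  have hM1 : C * s ^ (2 + κ) / (s * l / 2 - p) ≤ M := le_max_left _ _
  have hM0 : 0 ≤ M := le_trans (by positivity) hM1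
  have hCs : C * s ^ (2 + κ) ≤ M * (s * l / 2 - p) := by
    rw [div_le_iff₀ hδ] at hM1; linarith [hM1]
  have key : ∀ k, k0 ≤ k → e k ≤ M / ((k : ℝ) + σ) ^ p := by
    intro k hk
    induction k, hk using Nat.le_induction with
    | base =>
      rw [le_div_iff₀ (by positivity)]
      exact le_max_right _ _
    | succ n hn ih =>
      set t : ℝ := (n : ℝ) + σ with htdef
      have ht0 : 0 < t := by positivity
      have htsl : s * l ≤ t := by
        have h1 : (k0 : ℝ) ≤ (n : ℝ) := by exact_mod_cast hn
        simp only [htdef]; linarith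
      have htp : (0:ℝ) < t ^ p := Real.rpow_pos_of_pos ht0 p
      have ht1p : (0:ℝ) < (t + 1) ^ p := Real.rpow_pos_of_pos (by linarith) p
      have hn1 : 1 ≤ n := le_trans hk01 hn
      have hrec' := hrec n hn1
      have hcoef : 0 ≤ 1 - s / t * l / 2 := by
        rw [div_mul_eq_mul_div, div_div, sub_nonneg, div_le_one (by positivity)]
        linarith
      have step1 : e (n + 1) ≤ (1 - s / t * l / 2) * (M / t ^ p) + C * (s / t) ^ (2 + κ) :=
        le_trans hrec' (by gcongr)
      have hrw : C * (s / t) ^ (2 + κ) = C * s ^ (2 + κ) / (t ^ p * t) := by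
        rw [Real.div_rpow hs.le ht0.le]
        have h2 : (2 + κ : ℝ) = p + 1 := by simp only [hpdef]; ring
        rw [h2, Real.rpow_add ht0, Real.rpow_one, mul_div_assoc]
      -- Bernoulli
      have hber : 1 - p / (t + 1) ≤ (t / (t + 1)) ^ p := by
        have h1 : (-1:ℝ) ≤ -(1 / (t + 1)) := by
          have : 1 / (t + 1) ≤ 1 := by rw [div_le_one (by linarith)]; linarith
          linarith
        have h := one_add_mul_self_le_rpow_one_add h1 hp1
        have e1 : (1:ℝ) + -(1 / (t + 1)) = t / (t + 1) := by field_simp; ring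
        rw [e1] at h
        calc 1 - p / (t + 1) = 1 + p * -(1 / (t + 1)) := by ring
          _ ≤ _ := h
      have hscal : (1 - s / t * l / 2) * M * t + C * s ^ (2 + κ) ≤ M * (1 - p / t) * t := by
        have e2 : (1 - s / t * l / 2) * M * t = M * t - s * l * M / 2 := by
          field_simp
        have e3 : M * (1 - p / t) * t = M * t - M * p := by field_simp
        rw [e2, e3]; nlinarith [hCs]
      have hA : (1 - s / t * l / 2) * (M / t ^ p) + C * s ^ (2 + κ) / (t ^ p * t)
          ≤ M * (1 - p / t) / t ^ p := by
        have heq1 : (1 - s / t * l / 2) * (M / t ^ p) + C * s ^ (2 + κ) / (t ^ p * t)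
            = ((1 - s / t * l / 2) * M * t + C * s ^ (2 + κ)) / (t ^ p * t) := by
          field_simp
        have heq2 : M * (1 - p / t) / t ^ p = (M * (1 - p / t) * t) / (t ^ p * t) := by
          rw [mul_div_mul_right _ _ ht0.ne']
        rw [heq1, heq2]
        exact (div_le_div_iff_of_pos_right (by positivity)).mpr hscal
      have hB : M * (1 - p / t) / t ^ p ≤ M * ((t / (t + 1)) ^ p) / t ^ p := by
        have hpt : p / (t + 1) ≤ p / t := by gcongr; linarith
        gcongr
        linarith [hber, hpt]
      have hC2 : M * ((t / (t + 1)) ^ p) / t ^ p = M / (t + 1) ^ p := by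
        rw [Real.div_rpow ht0.le (by linarith)]
        field_simp
      have hcast : ((n + 1 : ℕ) : ℝ) + σ = t + 1 := by
        simp only [htdef]; push_cast; ring
      rw [hcast]
      calc e (n + 1) ≤ (1 - s / t * l / 2) * (M / t ^ p) + C * (s / t) ^ (2 + κ) := step1
        _ = (1 - s / t * l / 2) * (M / t ^ p) + C * s ^ (2 + κ) / (t ^ p * t) := by rw [hrw]
        _ ≤ M * (1 - p / t) / t ^ p := hA
        _ ≤ M * ((t / (t + 1)) ^ p) / t ^ p := hB
        _ = M / (t + 1) ^ p := hC2
  rw [isBigO_iff]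
  refine ⟨M, ?_⟩
  filter_upwards [eventually_ge_atTop k0] with k hk
  have hk1 : 1 ≤ k := le_trans hk01 hk
  have hkR : (1:ℝ) ≤ (k : ℝ) := by exact_mod_cast hk1
  have hkp : (0:ℝ) < (k : ℝ) ^ p := Real.rpow_pos_of_pos (by linarith) p
  rw [Real.norm_eq_abs, Real.norm_eq_abs, abs_of_nonneg (he k), abs_of_nonneg (by positivity)]
  calc e k ≤ M / ((k : ℝ) + σ) ^ p := key k hk
    _ ≤ M / (k : ℝ) ^ p := by
        gcongr
        linarith
    _ = M * (1 / (k : ℝ) ^ p) := by ring
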